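/- Let $W$ be an integer-valued random variable and let $M_a$ be a mode of $W$, where $W$ follows a discrete exponential family distribution with parameter $a$, i.e., $\Pr[W=x]=e^{-a\cdot T(x)}/Z(a)$ with $Z(a)=\sum_{x\in\mathbb{Z}}e^{-a\cdot T(x)}$ finite. If $\mathbb{E}[|W-M_a|] \le C$, then $e^{a\cdot T(M_a)} Z(a) \le 4C + O(1)$; concretely, $e^{a\cdot T(M_a)} Z(a) \le 4\,\mathbb{E}[|W-M_a|] + 3$. -/

import Mathlib

lemma abs_sum_Icc : ∀ u : ℕ, (∑ n ∈ Finset.Icc (-(u:ℤ)) (u:ℤ), |(n:ℝ)|) = u * (u+1) := by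
  intro u
  induction u with
  | zero => simp
  | succ n ih =>
    have h1 : Finset.Icc (-((n:ℤ)+1)) ((n:ℤ)+1) =
        insert (-((n:ℤ)+1)) (insert ((n:ℤ)+1) (Finset.Icc (-(n:ℤ)) (n:ℤ))) := by
      ext x; simp [Finset.mem_Icc]; omega
    push_cast
    rw [h1, Finset.sum_insert, Finset.sum_insert]
    · push_cast at ih ⊢
      rw [ih]
      rw [abs_of_nonpos (by linarith), abs_of_nonneg (by linarith)]
      ring
    · simp [Finset.mem_Icc]
    · simp [Finset.mem_Icc]; omega

lemma tent_summable (u : ℕ) (M : ℤ) :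
    Summable fun n : ℤ => max ((u:ℝ) - |(n:ℝ) - (M:ℝ)|) 0 := by
  apply summable_of_ne_finset_zero (s := Finset.Icc (M - u) (M + u))
  intro n hn
  simp only [Finset.mem_Icc, not_and_or, not_le] at hn
  apply max_eq_right
  have : (u:ℝ) ≤ |(n:ℝ) - (M:ℝ)| := by
    rw [← Int.cast_natCast (R := ℝ), ← Int.cast_sub, ← Int.cast_abs, Int.cast_le]
    rcases abs_cases (n - M) with ⟨h1,h2⟩|⟨h1,h2⟩ <;> omega
  linarith

lemma tent_tsum (u : ℕ) (M : ℤ) :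
    ∑' n : ℤ, max ((u:ℝ) - |(n:ℝ) - (M:ℝ)|) 0 = (u:ℝ)^2 := by
  have h := (Equiv.addRight M).tsum_eq (fun n : ℤ => max ((u:ℝ) - |(n:ℝ) - (M:ℝ)|) 0)
  rw [← h]
  have hsimp : ∀ m : ℤ, max ((u:ℝ) - |((Equiv.addRight M) m : ℝ) - (M:ℝ)|) 0
      = max ((u:ℝ) - |(m:ℝ)|) 0 := by
    intro m
    simp only [Equiv.coe_addRight]
    push_cast
    ring_nf
  simp only [hsimp]
  rw [tsum_eq_sum (s := Finset.Icc (-(u:ℤ)) (u:ℤ))]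
  · have hcongr : ∀ n ∈ Finset.Icc (-(u:ℤ)) (u:ℤ),
        max ((u:ℝ) - |(n:ℝ)|) 0 = (u:ℝ) - |(n:ℝ)| := by
      intro n hn
      simp only [Finset.mem_Icc] at hn
      apply max_eq_left
      have : |(n:ℝ)| ≤ (u:ℝ) := by
        rw [← Int.cast_natCast (R := ℝ), ← Int.cast_abs, Int.cast_le]
        rcases abs_cases n with ⟨h1,h2⟩|⟨h1,h2⟩ <;> omega
      linarith
    rw [Finset.sum_congr rfl hcongr, Finset.sum_sub_distrib, abs_sum_Icc,
      Finset.sum_const, Int.card_Icc]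
    have h2 : ((u:ℤ) + 1 - (-(u:ℤ))).toNat = 2*u + 1 := by omega
    rw [h2, nsmul_eq_mul]
    push_cast
    ring
  · intro n hn
    simp only [Finset.mem_Icc, not_and_or, not_le] at hn
    apply max_eq_right
    have : (u:ℝ) ≤ |(n:ℝ)| := by
      rw [← Int.cast_natCast (R := ℝ), ← Int.cast_abs, Int.cast_le]
      rcases abs_cases n with ⟨h1,h2⟩|⟨h1,h2⟩ <;> omega
    linarith

open Matrix

/-- For a discrete exponential family distribution `Pr[W = x] = e^{-a·T(x)}/Z(a)` on `ℤ`
with mode `M` (so `a·T(x) ≥ a·T(M)` for all `x`), the partition function satisfies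
`e^{a·T(M)} Z(a) ≤ 4 𝔼|W - M| + 3`. -/
theorem partition_function_upper_bound (k : ℕ) (T : ℤ → Fin k → ℝ) (a : Fin k → ℝ) (M : ℤ)
    (hZ : Summable fun x : ℤ => Real.exp (-(a ⬝ᵥ T x)))
    (hmode : ∀ x : ℤ, a ⬝ᵥ T M ≤ a ⬝ᵥ T x)
    (hAbsSum : Summable fun x : ℤ =>
      |(x : ℝ) - M| * (Real.exp (-(a ⬝ᵥ T x)) / ∑' y : ℤ, Real.exp (-(a ⬝ᵥ T y)))) :
    Real.exp (a ⬝ᵥ T M) * (∑' y : ℤ, Real.exp (-(a ⬝ᵥ T y))) ≤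
      4 * (∑' x : ℤ, |(x : ℝ) - M| *
        (Real.exp (-(a ⬝ᵥ T x)) / ∑' y : ℤ, Real.exp (-(a ⬝ᵥ T y)))) + 3 := by
  set Z := ∑' y : ℤ, Real.exp (-(a ⬝ᵥ T y)) with hZdef
  have hZpos : 0 < Z := Summable.tsum_pos hZ (fun x => (Real.exp_pos _).le) M (Real.exp_pos _)
  set c := Real.exp (a ⬝ᵥ T M) with hc
  set E := ∑' x : ℤ, |(x:ℝ) - M| * (Real.exp (-(a ⬝ᵥ T x)) / Z) with hE
  set w : ℤ → ℝ := fun x => c * Real.exp (-(a ⬝ᵥ T x)) with hw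
  have hw_nonneg : ∀ x, 0 ≤ w x := fun x =>
    mul_nonneg (Real.exp_pos _).le (Real.exp_pos _).le
  have hw_le_one : ∀ x, w x ≤ 1 := by
    intro x
    show c * Real.exp (-(a ⬝ᵥ T x)) ≤ 1
    rw [hc, ← Real.exp_add]
    rw [Real.exp_le_one_iff]
    linarith [hmode x]
  have hwM : w M = 1 := by
    show c * Real.exp (-(a ⬝ᵥ T M)) = 1
    rw [hc, ← Real.exp_add]
    simp
  have hwsum : Summable w := hZ.mul_left c
  set S := c * Z with hSdef
  have hS : ∑' x, w x = S := tsum_mul_left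
  have hSpos : 0 < S := mul_pos (Real.exp_pos _) hZpos
  have hS1 : 1 ≤ S := by
    have := Summable.le_tsum hwsum M (fun x _ => hw_nonneg x)
    rw [hwM, hS] at this
    exact this
  have hE_nonneg : 0 ≤ E := tsum_nonneg fun x =>
    mul_nonneg (abs_nonneg _) (div_nonneg (Real.exp_pos _).le hZpos.le)
  by_cases hS3 : S ≤ 3
  · linarith
  push_neg at hS3
  have habs : (fun x : ℤ => |(x:ℝ) - M| * w x)
      = fun x : ℤ => S * (|(x:ℝ) - M| * (Real.exp (-(a ⬝ᵥ T x)) / Z)) := by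
    funext x
    have hwx : w x = c * Real.exp (-(a ⬝ᵥ T x)) := rfl
    rw [hwx, hSdef]
    field_simp
  have habs_sum : Summable (fun x : ℤ => |(x:ℝ) - M| * w x) := by
    rw [habs]; exact hAbsSum.mul_left _
  have hES : ∑' x : ℤ, |(x:ℝ) - M| * w x = S * E := by
    rw [habs, tsum_mul_left]
  set u : ℕ := (round (S/2)).toNat with hu
  have hupos : (0:ℤ) ≤ round (S/2) := by
    by_contra h
    push_neg at h
    have h1 : ((round (S/2) : ℤ) : ℝ) < 0 := by exact_mod_cast h
    have h2 := abs_sub_round (S/2)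
    rw [abs_le] at h2
    linarith
  have hucast : ((u:ℝ)) = ((round (S/2) : ℤ) : ℝ) := by
    have h := Int.toNat_of_nonneg hupos
    rw [hu]
    exact_mod_cast congrArg (fun z : ℤ => (z:ℝ)) h
  have huS : |(u:ℝ) - S/2| ≤ 1/2 := by
    rw [hucast, abs_sub_comm]; exact abs_sub_round (S/2)
  have hkey : ∀ x : ℤ, (u:ℝ) * w x - max ((u:ℝ) - |(x:ℝ) - (M:ℝ)|) 0 ≤ |(x:ℝ) - M| * w x := by
    intro x
    rcases le_or_gt ((u:ℝ)) (|(x:ℝ) - M|) with h | h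
    · rw [max_eq_right (by linarith)]
      nlinarith [hw_nonneg x]
    · rw [max_eq_left (by linarith)]
      nlinarith [hw_le_one x, hw_nonneg x]
  have hsum_le := Summable.tsum_le_tsum hkey ((hwsum.mul_left ((u:ℝ))).sub (tent_summable u M)) habs_sum
  rw [Summable.tsum_sub (hwsum.mul_left _) (tent_summable u M), tsum_mul_left, hS,
    tent_tsum, hES] at hsum_le
  rw [abs_le] at huS
  nlinarith [hsum_le, huS.1, huS.2, hS3, hE_nonneg, hSpos]
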